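/- arXiv:hep-th/0604132 — 8 statements merged into one kernel-verified Lean document; each statement's English description precedes it below -/
import Mathlib

section
/- Let A be a commutative ℂ-algebra, Ω¹ a finitely generated projective A-module, d : A → Ω¹ a ℂ-linear derivation, ∇ a connection on Ω¹, and g ∈ Ω¹ ⊗_A Ω¹ a nondegenerate metric. Then there exists a unique connection ∇* on Ω¹ (the adjoint connection of ∇ relative to g) satisfying the adjointness condition (∇* ⊗ id)(g) + (id ⊗ ∇)₍₁₂₎(g) = 0, where (id ⊗ ∇)₍₁₂₎(g) := Σ g²₍₋₁₎ ⊗ g¹ ⊗ g²₍₀₎ denotes the result of applying ∇ to the second tensor factor of g = Σ g¹ ⊗ g² and placing the differentiating (left-hand) output of ∇ in the first tensor position. Equivalently, ∇* is the unique connection with ((∇* − ∇) ⊗ id)(g) = −∇g, where ∇g := Σ (∇g¹) ⊗ g² + Σ g²₍₋₁₎ ⊗ g¹ ⊗ g²₍₀₎ is the derivation extension of ∇ to g keeping the differentiating output in the first tensor position. -/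
set_option linter.unusedSectionVars false


noncomputable section

namespace WeakRiemannian

open scoped TensorProduct

variable (A : Type) [CommRing A] [Algebra ℂ A]
variable (Ω : Type) [AddCommGroup Ω] [Module ℂ Ω] [Module A Ω] [IsScalarTower ℂ A Ω]

/-- `d : A → Ω¹` is a (ℂ-linear) derivation. -/
def IsDerivation (d : A →ₗ[ℂ] Ω) : Prop :=
  ∀ f g : A, d (f * g) = f • d g + g • d f

/-- A connection on `Ω¹`: a ℂ-linear map `∇ : Ω¹ → Ω¹ ⊗_A Ω¹` with
`∇(fτ) = df ⊗ τ + f∇τ`. -/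
def IsConnection (d : A →ₗ[ℂ] Ω) (nab : Ω →ₗ[ℂ] Ω ⊗[A] Ω) : Prop :=
  ∀ (f : A) (τ : Ω), nab (f • τ) = d f ⊗ₜ[A] τ + f • nab τ

/-- `(φ ⊗ id)(g)` for `φ ∈ Hom_A(Ω¹, A)`. -/
def contractL (φ : Ω →ₗ[A] A) : Ω ⊗[A] Ω →ₗ[A] Ω :=
  TensorProduct.lift ((LinearMap.lsmul A Ω).comp φ)

/-- `(id ⊗ φ)(g)` for `φ ∈ Hom_A(Ω¹, A)`. -/
def contractR (φ : Ω →ₗ[A] A) : Ω ⊗[A] Ω →ₗ[A] Ω :=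
  TensorProduct.lift (((LinearMap.lsmul A Ω).comp φ).flip)

/-- `g ∈ Ω¹ ⊗_A Ω¹` is a nondegenerate metric: both induced maps
`Hom_A(Ω¹,A) → Ω¹` are bijective. -/
def IsMetric (g : Ω ⊗[A] Ω) : Prop :=
  Function.Bijective (fun φ : Ω →ₗ[A] A => contractL A Ω φ g) ∧
  Function.Bijective (fun φ : Ω →ₗ[A] A => contractR A Ω φ g)

/-- The adjointness condition `(∇* ⊗ id)(g) + (id ⊗ ∇)₍₁₂₎(g) = 0`, expressed
on any representation `g = Σᵢ uᵢ ⊗ vᵢ`: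
`Σᵢ (∇* uᵢ) ⊗ vᵢ + Σᵢ (∇vᵢ)₍₋₁₎ ⊗ uᵢ ⊗ (∇vᵢ)₍₀₎ = 0` in `Ω¹ ⊗_A Ω¹ ⊗_A Ω¹`
(the differentiating output of `∇` on the second leg is placed first). -/
def AdjointCondition (nabS nab : Ω →ₗ[ℂ] Ω ⊗[A] Ω) (g : Ω ⊗[A] Ω) : Prop :=
  ∀ (n : ℕ) (u v : Fin n → Ω), g = ∑ i, u i ⊗ₜ[A] v i →
    (∑ i, TensorProduct.assoc A Ω Ω Ω (nabS (u i) ⊗ₜ[A] v i)) +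
      (∑ i, LinearMap.lTensor Ω (TensorProduct.mk A Ω Ω (u i)) (nab (v i))) = 0

/-- The equivalent condition `((∇* − ∇) ⊗ id)(g) = −∇g`, where
`∇g = Σ (∇g¹) ⊗ g² + Σ g²₍₋₁₎ ⊗ g¹ ⊗ g²₍₀₎` is the derivation extension of `∇`
keeping the differentiating output in the first position. -/
def AdjointCondition' (nabS nab : Ω →ₗ[ℂ] Ω ⊗[A] Ω) (g : Ω ⊗[A] Ω) : Prop :=
  ∀ (n : ℕ) (u v : Fin n → Ω), g = ∑ i, u i ⊗ₜ[A] v i →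
    (∑ i, TensorProduct.assoc A Ω Ω Ω ((nabS (u i) - nab (u i)) ⊗ₜ[A] v i)) =
      -((∑ i, TensorProduct.assoc A Ω Ω Ω (nab (u i) ⊗ₜ[A] v i)) +
        (∑ i, LinearMap.lTensor Ω (TensorProduct.mk A Ω Ω (u i)) (nab (v i))))

/-! ### Auxiliary material -/

/-- Any element of a tensor product is a finite (Fin-indexed) sum of simple tensors. -/
theorem exists_rep (x : Ω ⊗[A] Ω) : ∃ (n : ℕ) (u v : Fin n → Ω),
    x = ∑ i, u i ⊗ₜ[A] v i := by
  obtain ⟨s, hs⟩ := TensorProduct.exists_finset x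
  refine ⟨s.card, fun i => ((s.equivFin.symm i : Ω × Ω)).1,
    fun i => ((s.equivFin.symm i : Ω × Ω)).2, ?_⟩
  rw [hs, ← Finset.sum_coe_sort s (fun p => p.1 ⊗ₜ[A] p.2),
    ← Equiv.sum_comp s.equivFin.symm (fun a : s => (a : Ω × Ω).1 ⊗ₜ[A] (a : Ω × Ω).2)]

theorem lid_rTensor (φ : Ω →ₗ[A] A) (x : Ω ⊗[A] Ω) :
    TensorProduct.lid A Ω (LinearMap.rTensor Ω φ x) = contractL A Ω φ x := by
  induction x with
  | zero => simp
  | tmul a b => simp [contractL]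
  | add a b ha hb => simp [map_add, ha, hb]

/-- Key bijectivity: if the metric is left-nondegenerate, then for any f.g.
projective module `P`, the map `Hom_A(Ω, P) → P ⊗ Ω`, `D ↦ (D ⊗ id)(g)`, is
bijective. -/
theorem key (g : Ω ⊗[A] Ω)
    (hg1 : Function.Bijective (fun φ : Ω →ₗ[A] A => contractL A Ω φ g))
    (P : Type) [AddCommGroup P] [Module A P] [Module.Finite A P]
    [Module.Projective A P] :
    Function.Bijective (fun D : Ω →ₗ[A] P => LinearMap.rTensor Ω D g) := by
  -- base case P = A
  have base : Function.Bijective (fun φ : Ω →ₗ[A] A => LinearMap.rTensor Ω φ g) := by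
    have : (fun φ : Ω →ₗ[A] A => LinearMap.rTensor Ω φ g)
        = (fun x => (TensorProduct.lid A Ω).symm x) ∘ (fun φ => contractL A Ω φ g) := by
      funext φ
      show LinearMap.rTensor Ω φ g = (TensorProduct.lid A Ω).symm (contractL A Ω φ g)
      rw [← lid_rTensor A Ω φ g]
      exact (LinearEquiv.symm_apply_apply _ _).symm
    rw [this]
    exact (TensorProduct.lid A Ω).symm.bijective.comp hg1
  -- case P = Fin n → A
  have pic : ∀ (n : ℕ),
      Function.Bijective (fun D : Ω →ₗ[A] (Fin n → A) => LinearMap.rTensor Ω D g) := by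
    intro n
    -- component map is injective
    have hcomp : ∀ (z w : (Fin n → A) ⊗[A] Ω),
        (∀ j, LinearMap.rTensor Ω (LinearMap.proj j) z
            = LinearMap.rTensor Ω (LinearMap.proj j) w) → z = w := by
      intro z w h
      set E : (Fin n → A) ⊗[A] Ω ≃ₗ[A] (Fin n → A ⊗[A] Ω) :=
        (TensorProduct.comm A _ Ω).trans ((TensorProduct.piRight A A Ω (fun _ : Fin n => A)).trans
          (LinearEquiv.piCongrRight fun _ => TensorProduct.comm A Ω A)) with hE
      have hEz : ∀ (z : (Fin n → A) ⊗[A] Ω) j,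
          E z j = LinearMap.rTensor Ω (LinearMap.proj j) z := by
        intro z j
        induction z with
        | zero => simp
        | tmul a b => simp [hE, TensorProduct.piRight]
        | add a b ha hb => simp [map_add, ha, hb]
      apply E.injective
      funext j
      rw [hEz, hEz, h j]
    constructor
    · intro D1 D2 h
      have h' : LinearMap.rTensor Ω D1 g = LinearMap.rTensor Ω D2 g := h
      refine LinearMap.ext fun τ => funext fun j => ?_
      have h2 : LinearMap.rTensor Ω ((LinearMap.proj j).comp D1) g
          = LinearMap.rTensor Ω ((LinearMap.proj j).comp D2) g := by
        simp only [LinearMap.rTensor_comp, LinearMap.comp_apply, h']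
      have h3 := base.injective h2
      exact LinearMap.congr_fun h3 τ
    · intro y
      choose φ hφ using fun j => base.surjective (LinearMap.rTensor Ω (LinearMap.proj j) y)
      refine ⟨LinearMap.pi φ, hcomp _ _ fun j => ?_⟩
      show LinearMap.rTensor Ω (LinearMap.proj j) (LinearMap.rTensor Ω (LinearMap.pi φ) g)
          = LinearMap.rTensor Ω (LinearMap.proj j) y
      rw [← LinearMap.rTensor_comp_apply]
      have h4 : (LinearMap.proj j).comp (LinearMap.pi φ) = φ j := LinearMap.proj_pi φ j
      rw [h4]
      exact hφ j
  -- general P: retract of some Fin n → A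
  obtain ⟨n, π, hπ⟩ := Module.Finite.exists_fin' A P
  obtain ⟨i, hi⟩ := Module.projective_lifting_property π LinearMap.id hπ
  constructor
  · intro D1 D2 h
    have h' : LinearMap.rTensor Ω D1 g = LinearMap.rTensor Ω D2 g := h
    have h2 : LinearMap.rTensor Ω (i.comp D1) g = LinearMap.rTensor Ω (i.comp D2) g := by
      simp only [LinearMap.rTensor_comp, LinearMap.comp_apply, h']
    have h3 := (pic n).injective h2
    have h4 : π.comp (i.comp D1) = π.comp (i.comp D2) := by rw [h3]
    rwa [← LinearMap.comp_assoc, ← LinearMap.comp_assoc, hi, LinearMap.id_comp,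
      LinearMap.id_comp] at h4
  · intro x
    obtain ⟨Dq, hDq⟩ := (pic n).surjective (LinearMap.rTensor Ω i x)
    have hDq' : LinearMap.rTensor Ω Dq g = LinearMap.rTensor Ω i x := hDq
    refine ⟨π.comp Dq, ?_⟩
    show LinearMap.rTensor Ω (π.comp Dq) g = x
    rw [LinearMap.rTensor_comp, LinearMap.comp_apply, hDq', ← LinearMap.comp_apply,
      ← LinearMap.rTensor_comp, hi, LinearMap.rTensor_id, LinearMap.id_apply]

/-- The balanced bi-additive map underlying the adjointness pairing,
for a connection `nab`. -/
def Phi (d : A →ₗ[ℂ] Ω) (nab : Ω →ₗ[ℂ] Ω ⊗[A] Ω) (hnab : IsConnection A Ω d nab) :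
    Ω ⊗[A] Ω →+ Ω ⊗[A] (Ω ⊗[A] Ω) :=
  TensorProduct.liftAddHom
    (AddMonoidHom.mk'
      (fun u => AddMonoidHom.mk'
        (fun v => TensorProduct.assoc A Ω Ω Ω (nab u ⊗ₜ[A] v)
          + LinearMap.lTensor Ω (TensorProduct.mk A Ω Ω u) (nab v))
        (by
          intro v w
          simp only [TensorProduct.tmul_add, map_add]
          abel))
      (by
        intro u w
        ext v
        simp only [AddMonoidHom.mk'_apply, AddMonoidHom.add_apply, map_add,
          TensorProduct.add_tmul, LinearMap.lTensor_add, LinearMap.add_apply]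
        abel))
    (by
      intro c u v
      simp only [AddMonoidHom.mk'_apply]
      rw [hnab c u, hnab c v]
      simp only [TensorProduct.add_tmul, TensorProduct.smul_tmul', map_add, map_smul,
        TensorProduct.assoc_tmul, TensorProduct.tmul_smul, LinearMap.map_smul,
        LinearMap.lTensor_smul, LinearMap.smul_apply, LinearMap.lTensor_tmul,
        TensorProduct.mk_apply]
      abel)

theorem Phi_tmul (d : A →ₗ[ℂ] Ω) (nab : Ω →ₗ[ℂ] Ω ⊗[A] Ω) (hnab : IsConnection A Ω d nab)
    (u v : Ω) : Phi A Ω d nab hnab (u ⊗ₜ[A] v)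
      = TensorProduct.assoc A Ω Ω Ω (nab u ⊗ₜ[A] v)
          + LinearMap.lTensor Ω (TensorProduct.mk A Ω Ω u) (nab v) := rfl

theorem Phi_rep (d : A →ₗ[ℂ] Ω) (nab : Ω →ₗ[ℂ] Ω ⊗[A] Ω) (hnab : IsConnection A Ω d nab)
    (g : Ω ⊗[A] Ω) (n : ℕ) (u v : Fin n → Ω) (hrep : g = ∑ i, u i ⊗ₜ[A] v i) :
    Phi A Ω d nab hnab g
      = (∑ i, TensorProduct.assoc A Ω Ω Ω (nab (u i) ⊗ₜ[A] v i)) +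
        (∑ i, LinearMap.lTensor Ω (TensorProduct.mk A Ω Ω (u i)) (nab (v i))) := by
  rw [hrep, map_sum, ← Finset.sum_add_distrib]
  rfl

/-- Let `A` be a commutative ℂ-algebra, `Ω¹` a finitely
generated projective `A`-module, `d` a ℂ-linear derivation, `∇` a connection on
`Ω¹` and `g` a nondegenerate metric.  Then there is a unique connection `∇*`
(the adjoint of `∇` relative to `g`) with `(∇* ⊗ id)(g) + (id ⊗ ∇)₍₁₂₎(g) = 0`;
equivalently (the two conditions agree for any connection), `∇*` is the unique
connection with `((∇* − ∇) ⊗ id)(g) = −∇g`. -/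
theorem adjoint_connection_exists_unique
    [Module.Finite A Ω] [Module.Projective A Ω]
    (d : A →ₗ[ℂ] Ω) (hd : IsDerivation A Ω d)
    (nab : Ω →ₗ[ℂ] Ω ⊗[A] Ω) (hnab : IsConnection A Ω d nab)
    (g : Ω ⊗[A] Ω) (hg : IsMetric A Ω g) :
    (∀ nabS : Ω →ₗ[ℂ] Ω ⊗[A] Ω, IsConnection A Ω d nabS →
      (AdjointCondition A Ω nabS nab g ↔ AdjointCondition' A Ω nabS nab g)) ∧
    (∃! nabS : Ω →ₗ[ℂ] Ω ⊗[A] Ω,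
      IsConnection A Ω d nabS ∧ AdjointCondition A Ω nabS nab g) := by
  constructor
  · -- the two conditions are equivalent (for any ℂ-linear maps, in fact)
    intro nabS _
    constructor
    · intro h n u v hrep
      have hc := h n u v hrep
      rw [add_eq_zero_iff_eq_neg] at hc
      simp only [TensorProduct.sub_tmul, map_sub, Finset.sum_sub_distrib]
      rw [hc]
      abel
    · intro h n u v hrep
      have hc := h n u v hrep
      simp only [TensorProduct.sub_tmul, map_sub, Finset.sum_sub_distrib] at hc
      rw [sub_eq_iff_eq_add] at hc
      rw [hc]
      abel
  · -- existence and uniqueness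
    have bij := key A Ω g hg.1 (Ω ⊗[A] Ω)
    obtain ⟨D, hD⟩ := bij.surjective
      ((TensorProduct.assoc A Ω Ω Ω).symm (- Phi A Ω d nab hnab g))
    have hD' : LinearMap.rTensor Ω D g
        = (TensorProduct.assoc A Ω Ω Ω).symm (- Phi A Ω d nab hnab g) := hD
    have hDg : TensorProduct.assoc A Ω Ω Ω (LinearMap.rTensor Ω D g)
        = - Phi A Ω d nab hnab g := by
      rw [hD', LinearEquiv.apply_symm_apply]
    set S : Ω →ₗ[ℂ] Ω ⊗[A] Ω := nab + D.restrictScalars ℂ with hSdef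
    have hSconn : IsConnection A Ω d S := by
      intro f τ
      simp only [hSdef, LinearMap.add_apply, LinearMap.coe_restrictScalars,
        hnab f τ, map_smul, smul_add]
      abel
    -- rewriting the adjoint sum for a map of the form nab + (A-linear D')
    have sum_eq : ∀ (D' : Ω →ₗ[A] Ω ⊗[A] Ω) (n : ℕ) (u v : Fin n → Ω),
        g = ∑ i, u i ⊗ₜ[A] v i →
        (∑ i, TensorProduct.assoc A Ω Ω Ω ((nab (u i) + D' (u i)) ⊗ₜ[A] v i)) +
          (∑ i, LinearMap.lTensor Ω (TensorProduct.mk A Ω Ω (u i)) (nab (v i)))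
        = Phi A Ω d nab hnab g
            + TensorProduct.assoc A Ω Ω Ω (LinearMap.rTensor Ω D' g) := by
      intro D' n u v hrep
      have h2 : LinearMap.rTensor Ω D' g = ∑ i, (D' (u i)) ⊗ₜ[A] v i := by
        rw [hrep, map_sum]
        simp
      rw [Phi_rep A Ω d nab hnab g n u v hrep, h2, map_sum]
      simp only [TensorProduct.add_tmul, map_add, Finset.sum_add_distrib]
      abel
    refine ⟨S, ⟨hSconn, ?_⟩, ?_⟩
    · intro n u v hrep
      have := sum_eq D n u v hrep
      simp only [hSdef, LinearMap.add_apply, LinearMap.coe_restrictScalars]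
      rw [this, hDg]
      abel
    · rintro S' ⟨hS'conn, hS'adj⟩
      -- the difference S' - nab is A-linear
      set D' : Ω →ₗ[A] Ω ⊗[A] Ω :=
        { toFun := fun τ => S' τ - nab τ
          map_add' := by intro x y; simp only [map_add]; abel
          map_smul' := by
            intro c x
            simp only [RingHom.id_apply, hS'conn c x, hnab c x, smul_sub]
            abel } with hD'def
      have hS'split : ∀ τ, S' τ = nab τ + D' τ := by
        intro τ
        simp [hD'def]
      obtain ⟨n, u, v, hrep⟩ := exists_rep A Ω g
      have hc := hS'adj n u v hrep
      have heq : (∑ i, TensorProduct.assoc A Ω Ω Ω ((nab (u i) + D' (u i)) ⊗ₜ[A] v i)) +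
          (∑ i, LinearMap.lTensor Ω (TensorProduct.mk A Ω Ω (u i)) (nab (v i))) = 0 := by
        simp only [← hS'split]
        exact hc
      rw [sum_eq D' n u v hrep] at heq
      have hD'g : LinearMap.rTensor Ω D' g
          = (TensorProduct.assoc A Ω Ω Ω).symm (- Phi A Ω d nab hnab g) := by
        apply (TensorProduct.assoc A Ω Ω Ω).injective
        rw [LinearEquiv.apply_symm_apply, eq_neg_iff_add_eq_zero, add_comm]
        exact heq
      have : D' = D := bij.injective (show LinearMap.rTensor Ω D' g
        = LinearMap.rTensor Ω D g by rw [hD'g, hD'])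
      ext τ
      rw [hS'split τ, this]
      simp [hSdef]

end WeakRiemannian
end
end

section
/- Let M be a nonempty finite set and A = (M → ℂ) the algebra of complex functions on M. The assignment E ↦ (Ω¹_E, d_E) induces a bijection between the set of irreflexive relations E ⊆ M × M (i.e. subsets of M × M minus the diagonal) and the set of isomorphism classes of first-order differential calculi on A, where an isomorphism of first-order differential calculi (Ω¹, d) and (Ω¹', d') is an A-bimodule isomorphism Φ : Ω¹ → Ω¹' with Φ∘d = d'. -/
noncomputable section

namespace GraphClassification

/-- A first-order differential calculus on the algebra `A = M → ℂ` of functions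
on a finite set `M`: an `A`-bimodule `Ω` (left `A`-module, right `A`-module via
`Aᵐᵒᵖ`, commuting actions, compatible with the ℂ-structure) together with a
ℂ-linear map `d : A → Ω` satisfying the Leibniz rule and such that `Ω` is
spanned over ℂ by `{f·dg}`. -/
structure FODC (M : Type) [Fintype M] [DecidableEq M] where
  Ω : Type
  [addCommGroup : AddCommGroup Ω]
  [modL : Module (M → ℂ) Ω]
  [modR : Module (M → ℂ)ᵐᵒᵖ Ω]
  [modC : Module ℂ Ω]
  [smulComm : SMulCommClass (M → ℂ) (M → ℂ)ᵐᵒᵖ Ω]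
  [towerL : IsScalarTower ℂ (M → ℂ) Ω]
  [towerR : IsScalarTower ℂ (M → ℂ)ᵐᵒᵖ Ω]
  d : (M → ℂ) → Ω
  d_linear : IsLinearMap ℂ d
  leibniz : ∀ f g : M → ℂ, d (f * g) = f • d g + MulOpposite.op g • d f
  spanning : Submodule.span ℂ {x : Ω | ∃ f g : M → ℂ, x = f • d g} = ⊤

attribute [instance] FODC.addCommGroup FODC.modL FODC.modR FODC.modC
  FODC.smulComm FODC.towerL FODC.towerR

variable {M : Type} [Fintype M] [DecidableEq M]

section GraphCalc

variable (E : Set (M × M))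

/-- Left module structure on the graph 1-forms: `(f·ω)(x,y) = f(x)ω(x,y)`. -/
instance grModL : Module (M → ℂ) (↥E → ℂ) where
  smul f ω := fun e => f (e : M × M).1 * ω e
  one_smul ω := funext fun e => one_mul _
  mul_smul f g ω := funext fun e =>
    show (f * g) (e : M × M).1 * ω e = f (e : M × M).1 * (g (e : M × M).1 * ω e) by
      rw [Pi.mul_apply, mul_assoc]
  smul_zero f := funext fun e => mul_zero _
  smul_add f ω₁ ω₂ := funext fun e => mul_add _ _ _
  add_smul f g ω := funext fun e =>
    show (f + g) (e : M × M).1 * ω e =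
        f (e : M × M).1 * ω e + g (e : M × M).1 * ω e by
      rw [Pi.add_apply, add_mul]
  zero_smul ω := funext fun e => zero_mul _

/-- Right module structure on the graph 1-forms: `(ω·g)(x,y) = ω(x,y)g(y)`. -/
instance grModR : Module (M → ℂ)ᵐᵒᵖ (↥E → ℂ) where
  smul f ω := fun e => f.unop (e : M × M).2 * ω e
  one_smul ω := funext fun e => one_mul _
  mul_smul f g ω := funext fun e =>
    show (f * g).unop (e : M × M).2 * ω e =
        f.unop (e : M × M).2 * (g.unop (e : M × M).2 * ω e) by
      rw [MulOpposite.unop_mul, Pi.mul_apply]; ring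
  smul_zero f := funext fun e => mul_zero _
  smul_add f ω₁ ω₂ := funext fun e => mul_add _ _ _
  add_smul f g ω := funext fun e =>
    show (f + g).unop (e : M × M).2 * ω e =
        f.unop (e : M × M).2 * ω e + g.unop (e : M × M).2 * ω e by
      rw [MulOpposite.unop_add, Pi.add_apply, add_mul]
  zero_smul ω := funext fun e => zero_mul _

instance grSMulComm : SMulCommClass (M → ℂ) (M → ℂ)ᵐᵒᵖ (↥E → ℂ) where
  smul_comm f g ω := funext fun e =>
    show f (e : M × M).1 * (g.unop (e : M × M).2 * ω e) =
        g.unop (e : M × M).2 * (f (e : M × M).1 * ω e) by ring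

instance grTowerL : IsScalarTower ℂ (M → ℂ) (↥E → ℂ) where
  smul_assoc c f ω := funext fun e =>
    show (c • f) (e : M × M).1 * ω e = c • (f (e : M × M).1 * ω e) by
      rw [Pi.smul_apply, smul_eq_mul, smul_eq_mul, mul_assoc]

instance grTowerR : IsScalarTower ℂ (M → ℂ)ᵐᵒᵖ (↥E → ℂ) where
  smul_assoc c f ω := funext fun e =>
    show (c • f).unop (e : M × M).2 * ω e = c • (f.unop (e : M × M).2 * ω e) by
      rw [MulOpposite.unop_smul, Pi.smul_apply, smul_eq_mul, smul_eq_mul, mul_assoc]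

/-- The graph first-order differential calculus `(Ω¹_E, d_E)` associated to an
irreflexive relation `E ⊆ M × M`: `Ω¹_E = E → ℂ`, bimodule structure
`(f·ω·g)(x,y) = f(x)ω(x,y)g(y)`, and `(d_E f)(x,y) = f(y) - f(x)`. -/
def graphFODC (hE : ∀ x : M, (x, x) ∉ E) : FODC M where
  Ω := ↥E → ℂ
  d f := fun e => f (e : M × M).2 - f (e : M × M).1
  d_linear := by
    constructor
    · intro f g; funext e
      show (f + g) (e : M × M).2 - (f + g) (e : M × M).1 = _
      rw [Pi.add_apply, Pi.add_apply]
      show _ = (f (e : M × M).2 - f (e : M × M).1) +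
        (g (e : M × M).2 - g (e : M × M).1)
      ring
    · intro c f; funext e
      show (c • f) (e : M × M).2 - (c • f) (e : M × M).1 = _
      rw [Pi.smul_apply, Pi.smul_apply]
      show _ = c • (f (e : M × M).2 - f (e : M × M).1)
      rw [smul_eq_mul, smul_eq_mul, smul_eq_mul]
      ring
  leibniz := by
    intro f g; funext e
    show (f * g) (e : M × M).2 - (f * g) (e : M × M).1 =
        f (e : M × M).1 * (g (e : M × M).2 - g (e : M × M).1) +
          g (e : M × M).2 * (f (e : M × M).2 - f (e : M × M).1)
    rw [Pi.mul_apply, Pi.mul_apply]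
    ring
  spanning := by
    rw [Submodule.eq_top_iff']
    intro ω
    haveI : Finite ↥E := Subtype.finite
    haveI := Fintype.ofFinite ↥E
    classical
    have hrep : ω = ∑ e₀ : ↥E, ω e₀ • (fun e : ↥E => if e = e₀ then (1 : ℂ) else 0) := by
      funext e
      simp [Finset.sum_apply, Pi.smul_apply]
    rw [hrep]
    refine Submodule.sum_mem _ fun e₀ _ => Submodule.smul_mem _ _ ?_
    apply Submodule.subset_span
    refine ⟨(fun z => if z = (e₀ : M × M).1 then 1 else 0),
      (fun z => if z = (e₀ : M × M).2 then 1 else 0), ?_⟩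
    have hne : (e₀ : M × M).1 ≠ (e₀ : M × M).2 := by
      intro hcontra
      have h2 := e₀.2
      have : ((e₀ : M × M).1, (e₀ : M × M).1) ∈ E := by
        rw [show ((e₀ : M × M).1, (e₀ : M × M).1) = (e₀ : M × M) from by
          ext <;> simp [hcontra]]
        exact h2
      exact hE _ this
    funext e
    show (if e = e₀ then (1 : ℂ) else 0) =
      (if (e : M × M).1 = (e₀ : M × M).1 then (1 : ℂ) else 0) *
        ((if (e : M × M).2 = (e₀ : M × M).2 then (1 : ℂ) else 0) -
          (if (e : M × M).1 = (e₀ : M × M).2 then (1 : ℂ) else 0))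
    by_cases h : e = e₀
    · subst h
      simp [hne]
    · simp only [if_neg h]
      have hne2 : (e : M × M) ≠ (e₀ : M × M) := fun hc => h (Subtype.ext hc)
      by_cases h1 : (e : M × M).1 = (e₀ : M × M).1
      · have h2 : (e : M × M).2 ≠ (e₀ : M × M).2 := fun hc => hne2 (Prod.ext h1 hc)
        by_cases h3 : (e : M × M).1 = (e₀ : M × M).2 <;> simp [h1, h2, h3] <;> exact hne
      · simp [h1]

end GraphCalc

/-- Isomorphism of first-order differential calculi: an additive bijection
intertwining both module structures and the differentials. -/
def FODCIso (C C' : FODC M) : Prop :=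
  ∃ Φ : C.Ω ≃+ C'.Ω,
    (∀ (f : M → ℂ) (x : C.Ω), Φ (f • x) = f • Φ x) ∧
    (∀ (f : (M → ℂ)ᵐᵒᵖ) (x : C.Ω), Φ (f • x) = f • Φ x) ∧
    (∀ f : M → ℂ, Φ (C.d f) = C'.d f)

set_option linter.unusedSectionVars false
set_option maxHeartbeats 1000000

section Aux

open MulOpposite

/-- The indicator function of a point. -/
def delta (x : M) : M → ℂ := fun z => if z = x then 1 else 0

lemma delta_mul_self (x : M) : delta (M := M) x * delta x = delta x := by
  funext z; by_cases h : z = x <;> simp [delta, h]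

lemma delta_mul_ne {x y : M} (h : x ≠ y) : delta (M := M) x * delta y = 0 := by
  funext z
  by_cases h1 : z = x
  · subst h1; simp [delta, h]
  · simp [delta, h1]

lemma mul_delta (f : M → ℂ) (x : M) : f * delta x = f x • delta x := by
  funext z; by_cases h : z = x <;> simp [delta, h]

lemma sum_delta : (∑ x : M, delta (M := M) x) = 1 := by
  funext z; simp [delta, Finset.sum_apply]

lemma delta_apply_self (x : M) : delta (M := M) x x = 1 := by simp [delta]

lemma delta_apply_ne {x y : M} (h : y ≠ x) : delta (M := M) x y = 0 := by simp [delta, h]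

lemma sum_smul_delta (g : M → ℂ) : (∑ z : M, g z • delta (M := M) z) = g := by
  funext w
  simp [delta, Finset.sum_apply, mul_ite]

variable (C : FODC M)

/-- The `(x,y)` matrix element of the differential of `δ_y`. -/
def eps (x y : M) : C.Ω := delta x • (op (delta y) • C.d (delta y))

/-- `d` as a bundled linear map. -/
def dL : (M → ℂ) →ₗ[ℂ] C.Ω := IsLinearMap.mk' C.d C.d_linear

lemma dL_apply (f : M → ℂ) : dL C f = C.d f := rfl

lemma key1 (x : M) :
    C.d (delta x) = delta x • C.d (delta x) + op (delta x) • C.d (delta x) := by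
  have := C.leibniz (delta x) (delta x)
  rwa [delta_mul_self] at this

lemma key2 {x y : M} (h : x ≠ y) :
    delta x • C.d (delta y) + op (delta y) • C.d (delta x) = 0 := by
  have h2 := C.leibniz (delta x) (delta y)
  rw [delta_mul_ne h] at h2
  rw [← h2, ← dL_apply, map_zero]

lemma eps_diag (x : M) : eps C x x = 0 := by
  have h2 : eps C x x = eps C x x + eps C x x := by
    show delta x • (op (delta x) • C.d (delta x)) = _
    conv_lhs => rw [key1 C x]
    rw [smul_add, smul_add]
    congr 1
    · rw [← smul_comm (delta x) (op (delta x)), ← mul_smul, delta_mul_self]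
      rfl
    · rw [← mul_smul, ← op_mul, delta_mul_self]
      rfl
  exact left_eq_add.mp h2

lemma ddelta_eq {x y : M} (hxy : x ≠ y) :
    delta x • C.d (delta y) = eps C x y := by
  conv_lhs => rw [key1 C y]
  rw [smul_add, ← mul_smul, delta_mul_ne hxy, zero_smul, zero_add]
  rfl

lemma proj_d_delta (x y z : M) :
    delta x • (op (delta y) • C.d (delta z)) =
      (delta z y - delta z x) • eps C x y := by
  by_cases hzy : y = z
  · subst hzy
    by_cases hzx : x = y
    · subst hzx
      rw [sub_self, zero_smul]
      exact eps_diag C x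
    · rw [delta_apply_self, delta_apply_ne hzx, sub_zero, one_smul]
      rfl
  · have h2 := key2 C (show z ≠ y from fun h => hzy h.symm)
    have hk : op (delta y) • C.d (delta z) = -(delta z • C.d (delta y)) :=
      eq_neg_of_add_eq_zero_right h2
    rw [hk, smul_neg, ← mul_smul]
    by_cases hzx : x = z
    · subst hzx
      have hxy : x ≠ y := fun h => hzy h.symm
      rw [delta_mul_self, ddelta_eq C hxy, delta_apply_ne hzy,
        delta_apply_self, zero_sub, neg_smul, one_smul]
    · rw [delta_mul_ne (fun h : x = z => hzx h), zero_smul, neg_zero,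
        delta_apply_ne (fun h : y = z => hzy h), delta_apply_ne (fun h : x = z => hzx h),
        sub_zero, zero_smul]

/-- The block projection `ω ↦ δ_x • (op δ_y • ω)` as a ℂ-linear map. -/
def projC (x y : M) : C.Ω →ₗ[ℂ] C.Ω where
  toFun ω := delta x • (op (delta y) • ω)
  map_add' u v := by
    show delta x • (op (delta y) • (u + v))
      = delta x • (op (delta y) • u) + delta x • (op (delta y) • v)
    rw [smul_add, smul_add]
  map_smul' c v := by
    show delta x • (op (delta y) • (c • v)) = c • (delta x • (op (delta y) • v))
    rw [← smul_comm c (op (delta y)) v, ← smul_comm c (delta x)]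

lemma projC_apply (x y : M) (ω : C.Ω) :
    projC C x y ω = delta x • (op (delta y) • ω) := rfl

lemma proj_d (x y : M) (g : M → ℂ) :
    projC C x y (C.d g) = (g y - g x) • eps C x y := by
  conv_lhs => rw [show C.d g = dL C g from rfl,
    show g = ∑ z : M, g z • delta z from (sum_smul_delta g).symm, map_sum, map_sum]
  have h0 : ∀ z : M, projC C x y (dL C (g z • delta z)) =
      (g z * (delta z y - delta z x)) • eps C x y := by
    intro z
    rw [map_smul, map_smul, dL_apply, projC_apply, proj_d_delta, smul_smul]
  rw [Finset.sum_congr rfl (fun z _ => h0 z), ← Finset.sum_smul]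
  congr 1
  have h1 : ∑ z : M, g z * (delta z y - delta z x)
      = (∑ z : M, g z * delta z y) - ∑ z : M, g z * delta z x := by
    rw [← Finset.sum_sub_distrib]
    exact Finset.sum_congr rfl fun z _ => mul_sub _ _ _
  have h2 : ∀ w : M, ∑ z : M, g z * delta z w = g w := by
    intro w
    have h3 := congrFun (sum_smul_delta g) w
    simpa [Finset.sum_apply] using h3
  rw [h1, h2, h2]

lemma smul_eps (f : M → ℂ) (x y : M) : f • eps C x y = f x • eps C x y := by
  show f • (delta x • (op (delta y) • C.d (delta y))) = _
  have hmd : delta x * f = f x • delta x := by rw [mul_comm, mul_delta]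
  rw [← mul_smul, mul_comm, hmd, smul_assoc]
  rfl

lemma op_smul_eps (g : M → ℂ) (x y : M) : op g • eps C x y = g y • eps C x y := by
  show op g • (delta x • (op (delta y) • C.d (delta y))) = _
  rw [← smul_comm (delta x) (op g), ← mul_smul, ← op_mul,
    show delta y * g = g y • delta y from by rw [mul_comm, mul_delta],
    op_smul, smul_assoc, ← smul_comm (g y) (delta x)]
  rfl

lemma op_smul_eps' (g : (M → ℂ)ᵐᵒᵖ) (x y : M) :
    g • eps C x y = g.unop y • eps C x y := by
  conv_lhs => rw [← op_unop g]
  rw [op_smul_eps]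

lemma proj_eps (x y a b : M) :
    projC C x y (eps C a b) = if a = x ∧ b = y then eps C x y else 0 := by
  rw [projC_apply]
  show delta x • (op (delta y) • (delta a • (op (delta b) • C.d (delta b)))) = _
  rw [← smul_comm (delta a) (op (delta y)), ← mul_smul (delta x),
    ← mul_smul (op (delta y)), ← op_mul]
  by_cases ha : a = x
  · subst ha
    by_cases hb : b = y
    · subst hb
      rw [delta_mul_self, delta_mul_self, if_pos ⟨rfl, rfl⟩]
      rfl
    · rw [delta_mul_ne (fun h : b = y => hb h), op_zero, zero_smul, smul_zero,
        if_neg (fun h => hb h.2)]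
  · rw [delta_mul_ne (fun h : x = a => ha h.symm), zero_smul,
      if_neg (fun h => ha h.1)]

lemma proj_mem (x y : M) (ω : C.Ω) :
    ∃ c : ℂ, projC C x y ω = c • eps C x y := by
  have hmem : ω ∈ (Submodule.span ℂ ({eps C x y} : Set C.Ω)).comap (projC C x y) := by
    have hsub : {v : C.Ω | ∃ f g : M → ℂ, v = f • C.d g} ⊆
        ((Submodule.span ℂ ({eps C x y} : Set C.Ω)).comap (projC C x y) : Set C.Ω) := by
      rintro v ⟨f, g, rfl⟩
      simp only [SetLike.mem_coe, Submodule.mem_comap]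
      have hmd : delta x * f = f x • delta x := by rw [mul_comm, mul_delta]
      have hcalc : projC C x y (f • C.d g) = (f x * (g y - g x)) • eps C x y := by
        rw [projC_apply, ← smul_comm f (op (delta y)), ← mul_smul (delta x) f, hmd,
          smul_assoc, ← projC_apply, proj_d, smul_smul]
      rw [hcalc]
      exact Submodule.smul_mem _ _ (Submodule.subset_span rfl)
    have h4 := Submodule.span_le.mpr hsub
    rw [C.spanning] at h4
    exact h4 Submodule.mem_top
  rw [Submodule.mem_comap, Submodule.mem_span_singleton] at hmem
  obtain ⟨c, hc⟩ := hmem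
  exact ⟨c, hc.symm⟩

lemma sum_proj (ω : C.Ω) : ∑ p : M × M, projC C p.1 p.2 ω = ω := by
  rw [Fintype.sum_prod_type]
  have hop : (∑ y : M, op (delta (M := M) y)) = 1 := by
    have h5 : (∑ y : M, op (delta (M := M) y)) = op (∑ y : M, delta y) :=
      (map_sum (opAddEquiv : (M → ℂ) ≃+ (M → ℂ)ᵐᵒᵖ) _ _).symm
    rw [h5, sum_delta, op_one]
  have hinner : ∀ x : M, (∑ y : M, projC C x y ω) = delta x • ω := by
    intro x
    simp only [projC_apply]
    rw [← Finset.smul_sum, ← Finset.sum_smul, hop, one_smul]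
  rw [Finset.sum_congr rfl (fun x _ => hinner x), ← Finset.sum_smul, sum_delta, one_smul]

/-- Value of the canonical matrix elements in a graph calculus. -/
lemma eps_graph_apply (E : Set (M × M)) (hE : ∀ x : M, (x, x) ∉ E) (x y : M) (e : ↥E) :
    eps (graphFODC E hE) x y e =
      delta x (e : M × M).1 * (delta y (e : M × M).2 *
        (delta y (e : M × M).2 - delta y (e : M × M).1)) := rfl

lemma eps_graph_ne_zero (E : Set (M × M)) (hE : ∀ x : M, (x, x) ∉ E) {x y : M}
    (hxy : x ≠ y) (hmem : (x, y) ∈ E) : eps (graphFODC E hE) x y ≠ 0 := by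
  intro h0
  have h1 : eps (graphFODC E hE) x y ⟨(x, y), hmem⟩ = (0 : ℂ) := congrFun h0 _
  rw [eps_graph_apply] at h1
  simp [delta, hxy] at h1

lemma eps_graph_eq_zero (E : Set (M × M)) (hE : ∀ x : M, (x, x) ∉ E) {x y : M}
    (hnot : (x, y) ∉ E) : eps (graphFODC E hE) x y = 0 := by
  funext e
  rw [eps_graph_apply]
  by_cases h1 : (e : M × M).1 = x
  · by_cases h2 : (e : M × M).2 = y
    · exfalso
      apply hnot
      have : (e : M × M) = (x, y) := Prod.ext h1 h2
      rw [← this]; exact e.2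
    · rw [delta_apply_ne h2, zero_mul, mul_zero]
      rfl
  · rw [delta_apply_ne h1, zero_mul]
    rfl

end Aux
/-- The assignment `E ↦ (Ω¹_E, d_E)` induces a bijection
between irreflexive relations `E ⊆ M × M` on a nonempty finite set `M` and the
isomorphism classes of first-order differential calculi on `A = M → ℂ`: every
first-order differential calculus on `A` is isomorphic to the graph calculus of
exactly one irreflexive relation `E`. -/
theorem graph_calculi_classification [Nonempty M] (C : FODC M) :
    ∃! E : {E : Set (M × M) // ∀ x : M, (x, x) ∉ E},
      FODCIso (graphFODC E.1 E.2) C := by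
  classical
  set E₀ : Set (M × M) := {p | p.1 ≠ p.2 ∧ eps C p.1 p.2 ≠ 0} with hE₀def
  have hE₀ : ∀ x : M, (x, x) ∉ E₀ := fun x h => h.1 rfl
  haveI : Fintype ↥E₀ := Set.Finite.fintype (Set.toFinite _)
  set T : (↥E₀ → ℂ) → C.Ω :=
    fun ω => ∑ e : ↥E₀, ω e • eps C (e : M × M).1 (e : M × M).2 with hT
  have hTap : ∀ ω, T ω = ∑ e : ↥E₀, ω e • eps C (e : M × M).1 (e : M × M).2 :=
    fun _ => rfl
  -- extension of sums over E₀ to sums over all pairs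
  have hext : ∀ F : M × M → C.Ω, (∀ p : M × M, p ∉ E₀ → F p = 0) →
      (∑ e : ↥E₀, F (e : M × M)) = ∑ p : M × M, F p := by
    intro F hF
    rw [← Finset.sum_subtype (Finset.univ.filter (fun p => p ∈ E₀))
      (fun p => by simp) F]
    exact Finset.sum_subset (Finset.filter_subset _ _)
      (fun p _ hp => hF p (fun hmem =>
        hp (Finset.mem_filter.mpr ⟨Finset.mem_univ _, hmem⟩)))
  have hvan : ∀ (c : M × M → ℂ) (p : M × M), p ∉ E₀ →
      c p • eps C p.1 p.2 = 0 := by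
    intro c p hp
    by_cases hd : p.1 = p.2
    · rw [show eps C p.1 p.2 = 0 from by rw [hd]; exact eps_diag C p.2, smul_zero]
    · have h0 : eps C p.1 p.2 = 0 := by
        by_contra hne
        exact hp ⟨hd, hne⟩
      rw [h0, smul_zero]
  -- block projections of T
  have hproj : ∀ (ω : ↥E₀ → ℂ) (x y : M) (h : (x, y) ∈ E₀),
      projC C x y (T ω) = ω ⟨(x, y), h⟩ • eps C x y := by
    intro ω x y h
    rw [hTap]
    simp only [map_sum, map_smul]
    rw [Finset.sum_eq_single (⟨(x, y), h⟩ : ↥E₀)]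
    · rw [proj_eps, if_pos ⟨rfl, rfl⟩]
    · intro e _ hne
      rw [proj_eps, if_neg, smul_zero]
      rintro ⟨h1, h2⟩
      exact hne (Subtype.ext (Prod.ext h1 h2))
    · intro habs; exact absurd (Finset.mem_univ _) habs
  -- additivity and subtractivity
  have hadd : ∀ u v, T (u + v) = T u + T v := by
    intro u v
    rw [hTap, hTap, hTap, ← Finset.sum_add_distrib]
    exact Finset.sum_congr rfl fun e _ => by rw [Pi.add_apply, add_smul]
  have hsub : ∀ u v, T (u - v) = T u - T v := by
    intro u v
    rw [hTap, hTap, hTap, ← Finset.sum_sub_distrib]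
    exact Finset.sum_congr rfl fun e _ => by rw [Pi.sub_apply, sub_smul]
  -- injectivity
  have hker : ∀ ω, T ω = 0 → ω = 0 := by
    intro ω hω
    funext e
    obtain ⟨⟨x, y⟩, he⟩ := e
    have h1 := hproj ω x y he
    rw [hω, map_zero] at h1
    rw [Pi.zero_apply]
    by_contra hc
    have heps : eps C x y = 0 := by
      have h2 : eps C x y = (ω ⟨(x, y), he⟩)⁻¹ • (ω ⟨(x, y), he⟩ • eps C x y) :=
        (inv_smul_smul₀ hc _).symm
      rw [← h1, smul_zero] at h2
      exact h2
    exact he.2 heps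
  have hinj : Function.Injective T := by
    intro u v huv
    have h3 : T (u - v) = 0 := by rw [hsub, huv, sub_self]
    exact sub_eq_zero.mp (hker _ h3)
  -- surjectivity
  have hsurj : Function.Surjective T := by
    intro w
    choose c hc using fun p : M × M => proj_mem C p.1 p.2 w
    refine ⟨fun e => c (e : M × M), ?_⟩
    rw [hTap]
    calc (∑ e : ↥E₀, c (e : M × M) • eps C (e : M × M).1 (e : M × M).2)
        = ∑ e : ↥E₀, (fun p : M × M => c p • eps C p.1 p.2) (e : M × M) :=
          Finset.sum_congr rfl fun e _ => rfl
      _ = ∑ p : M × M, c p • eps C p.1 p.2 :=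
          hext (fun p : M × M => c p • eps C p.1 p.2) (hvan c)
      _ = ∑ p : M × M, projC C p.1 p.2 w :=
          Finset.sum_congr rfl fun p _ => (hc p).symm
      _ = w := sum_proj C w
  let Φ : (graphFODC E₀ hE₀).Ω ≃+ C.Ω :=
    AddEquiv.mk' (Equiv.ofBijective T ⟨hinj, hsurj⟩) hadd
  have hΦap : ∀ ω, Φ ω = T ω := fun _ => rfl
  refine ⟨⟨E₀, hE₀⟩, ⟨Φ, ?_, ?_, ?_⟩, ?_⟩
  · -- left module map
    intro f ω
    erw [hΦap, hΦap, hTap, hTap, Finset.smul_sum]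
    refine Finset.sum_congr rfl fun e _ => ?_
    show (f (e : M × M).1 * ω e) • eps C (e : M × M).1 (e : M × M).2
      = f • (ω e • eps C (e : M × M).1 (e : M × M).2)
    rw [← smul_comm (ω e) f, smul_eps, smul_smul, mul_comm (ω e)]
  · -- right module map
    intro f ω
    erw [hΦap, hΦap, hTap, hTap, Finset.smul_sum]
    refine Finset.sum_congr rfl fun e _ => ?_
    show (f.unop (e : M × M).2 * ω e) • eps C (e : M × M).1 (e : M × M).2
      = f • (ω e • eps C (e : M × M).1 (e : M × M).2)
    rw [← smul_comm (ω e) f, op_smul_eps' C f, smul_smul, mul_comm (ω e)]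
  · -- differentials
    intro f
    erw [hΦap, hTap]
    calc (∑ e : ↥E₀, ((graphFODC E₀ hE₀).d f) e • eps C (e : M × M).1 (e : M × M).2)
        = ∑ e : ↥E₀, (fun p : M × M => (f p.2 - f p.1) • eps C p.1 p.2) (e : M × M) :=
          Finset.sum_congr rfl fun e _ => rfl
      _ = ∑ p : M × M, (f p.2 - f p.1) • eps C p.1 p.2 :=
          hext (fun p : M × M => (f p.2 - f p.1) • eps C p.1 p.2)
            (hvan (fun p => f p.2 - f p.1))
      _ = ∑ p : M × M, projC C p.1 p.2 (C.d f) :=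
          Finset.sum_congr rfl fun p _ => (proj_d C p.1 p.2 f).symm
      _ = C.d f := sum_proj C _
  · -- uniqueness
    rintro ⟨E, hE⟩ ⟨Φ', hL, hR, hd⟩
    apply Subtype.ext
    show E = E₀
    ext ⟨x, y⟩
    simp only [hE₀def, Set.mem_setOf_eq]
    have hPhiEps : ∀ a b : M, Φ' (eps (graphFODC E hE) a b) = eps C a b := by
      intro a b
      rw [show eps (graphFODC E hE) a b
          = delta a • (MulOpposite.op (delta b) • (graphFODC E hE).d (delta b)) from rfl,
        hL, hR, hd]
      rfl
    constructor
    · intro hmem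
      have hxy : x ≠ y := by
        intro h
        rw [← h] at hmem
        exact hE x hmem
      refine ⟨hxy, ?_⟩
      rw [← hPhiEps x y]
      intro h0
      exact eps_graph_ne_zero E hE hxy hmem
        (Φ'.injective (h0.trans (map_zero Φ').symm))
    · rintro ⟨hxy, hne⟩
      by_contra hnot
      apply hne
      rw [← hPhiEps x y, eps_graph_eq_zero E hE hnot, map_zero]

end GraphClassification
end
end

section
/- Let M be a nonempty finite set, A = (M → ℂ), and E ⊆ M × M an irreflexive relation which is n-regular: for each x ∈ M a bijection s_x : Fin n → {y ∈ M : (x,y) ∈ E} is given. Let λ_a : M → ℂ∖{0} be nonvanishing functions for a ∈ Fin n, and define e_a ∈ Ω¹_E by e_a(x,y) = λ_a(x) if y = s_x(a) and e_a(x,y) = 0 otherwise. Then: (i) {e_a : a ∈ Fin n} is a basis of Ω¹_E as a free left A-module; (ii) the bimodule commutation relations e_a·f = f^{(a)}·e_a hold for all f ∈ A, where f^{(a)}(x) := f(s_x(a)); (iii) d_E f = Σ_a (∂^a f)·e_a where the partial derivatives are the finite differences (∂^a f)(x) = (f(s_x(a)) − f(x))/λ_a(x); (iv) Σ_a (λ_a)^{-1}·e_a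 = Θ, the constant function 1 on E, so the calculus is inner with [Θ, f] = d_E f. -/
noncomputable section

namespace GraphCalculus

variable {M : Type} [Fintype M] [DecidableEq M] [Nonempty M]

/-- Left action of `A = M → ℂ` on the graph 1-forms `Ω¹_E = E → ℂ`. -/
def smulL (E : Set (M × M)) (f : M → ℂ) (ω : ↥E → ℂ) : ↥E → ℂ :=
  fun e => f (e : M × M).1 * ω e

/-- Right action of `A = M → ℂ` on the graph 1-forms `Ω¹_E = E → ℂ`. -/
def smulR (E : Set (M × M)) (ω : ↥E → ℂ) (f : M → ℂ) : ↥E → ℂ :=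
  fun e => ω e * f (e : M × M).2

/-- The graph differential `(d_E f)(x,y) = f(y) - f(x)`. -/
def dE (E : Set (M × M)) (f : M → ℂ) : ↥E → ℂ :=
  fun e => f (e : M × M).2 - f (e : M × M).1

/-- For an `n`-regular irreflexive graph `E` on a finite set
`M` (a bijection `s_x : Fin n ≃ {y : M | (x,y) ∈ E}` at each point) and
nonvanishing normalisations `λ_a`, the 1-forms
`e_a(x,y) = λ_a(x)` if `y = s_x(a)`, else `0`, satisfy:
(i) `{e_a}` is a basis of `Ω¹_E` as a free left `A`-module;
(ii) `e_a·f = f^{(a)}·e_a` with `f^{(a)}(x) = f(s_x(a))`;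
(iii) `d_E f = Σ_a (∂^a f)·e_a` with `(∂^a f)(x) = (f(s_x(a)) - f(x))/λ_a(x)`;
(iv) `Σ_a λ_a⁻¹·e_a = Θ`, the constant function 1 on `E`, so the calculus is
inner: `[Θ, f] = d_E f`. -/
theorem regular_graph_framing
    (E : Set (M × M)) (hE : ∀ x : M, (x, x) ∉ E) (n : ℕ)
    (s : ∀ x : M, Fin n ≃ {y : M // (x, y) ∈ E})
    (lam : Fin n → M → ℂ) (hlam : ∀ a x, lam a x ≠ 0)
    (e : Fin n → (↥E → ℂ))
    (he : ∀ (a : Fin n) (p : ↥E),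
      e a p =
        if ((p : M × M).2 = ((s (p : M × M).1 a : M))) then lam a (p : M × M).1
        else 0) :
    -- (i) free left module basis
    (∀ ω : ↥E → ℂ, ∃! f : Fin n → M → ℂ, ω = ∑ a, smulL E (f a) (e a)) ∧
    -- (ii) bimodule commutation relations
    (∀ (a : Fin n) (f : M → ℂ),
      smulR E (e a) f = smulL E (fun x => f (s x a)) (e a)) ∧
    -- (iii) finite-difference partial derivatives
    (∀ f : M → ℂ,
      dE E f = ∑ a, smulL E (fun x => (f (s x a) - f x) / lam a x) (e a)) ∧
    -- (iv) Θ and innerness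
    ((∑ a, smulL E (fun x => (lam a x)⁻¹) (e a)) = fun _ => (1 : ℂ)) ∧
    (∀ f : M → ℂ,
      smulR E (fun _ => (1 : ℂ)) f - smulL E f (fun _ => (1 : ℂ)) = dE E f) := by

  have key : ∀ (g : Fin n → M → ℂ) (p : ↥E),
      (∑ a, smulL E (g a) (e a)) p
        = g ((s (p : M × M).1).symm ⟨(p : M × M).2, p.2⟩) (p : M × M).1
          * lam ((s (p : M × M).1).symm ⟨(p : M × M).2, p.2⟩) (p : M × M).1 := by
    intro g p
    obtain ⟨⟨x, y⟩, hp⟩ := p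
    set a₀ := (s x).symm ⟨y, hp⟩ with ha₀
    have hy : y = ((s x a₀ : {y : M // (x, y) ∈ E}) : M) := by
      rw [ha₀, (s x).apply_symm_apply]
    simp only [Finset.sum_apply]
    rw [Finset.sum_eq_single a₀]
    · simp [smulL, he, ← hy, mul_comm]
    · intro b _ hb
      have hne : y ≠ ((s x b : {y : M // (x, y) ∈ E}) : M) := by
        intro h
        apply hb
        have h2 : (⟨y, hp⟩ : {y : M // (x, y) ∈ E}) = s x b := Subtype.ext h
        rw [ha₀, h2, Equiv.symm_apply_apply]
      simp [smulL, he, hne]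
    · intro h; exact absurd (Finset.mem_univ a₀) h
  have edge : ∀ (x : M) (a : Fin n), ((x, ((s x a : {y : M // (x, y) ∈ E}) : M)) : M × M) ∈ E :=
    fun x a => (s x a).2
  have symm_eval : ∀ (x : M) (a : Fin n),
      (s x).symm ⟨((s x a : {y : M // (x, y) ∈ E}) : M), edge x a⟩ = a := by
    intro x a
    have : (⟨((s x a : {y : M // (x, y) ∈ E}) : M), edge x a⟩ : {y : M // (x, y) ∈ E}) = s x a :=
      Subtype.ext rfl
    rw [this, Equiv.symm_apply_apply]
  refine ⟨?_, ?_, ?_, ?_, ?_⟩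
  · -- (i)
    intro ω
    refine ⟨fun a x => ω ⟨(x, ((s x a : {y : M // (x, y) ∈ E}) : M)), edge x a⟩ / lam a x,
      ?_, ?_⟩
    · funext p
      rw [key]
      obtain ⟨⟨x, y⟩, hp⟩ := p
      set a₀ := (s x).symm ⟨y, hp⟩ with ha₀
      have hy : (⟨y, hp⟩ : {y : M // (x, y) ∈ E}) = s x a₀ := by
        rw [ha₀, (s x).apply_symm_apply]
      have hy' : y = ((s x a₀ : {y : M // (x, y) ∈ E}) : M) := congrArg Subtype.val hy
      rw [div_mul_cancel₀ _ (hlam a₀ x)]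
      congr 1
      exact Subtype.ext (Prod.ext rfl hy')
    · intro g hg
      funext a x
      have := congrFun hg ⟨(x, ((s x a : {y : M // (x, y) ∈ E}) : M)), edge x a⟩
      rw [key] at this
      simp only [symm_eval] at this
      rw [this, mul_div_cancel_right₀ _ (hlam a x)]
  · -- (ii)
    intro a f
    funext p
    obtain ⟨⟨x, y⟩, hp⟩ := p
    simp only [smulR, smulL, he]
    split_ifs with h
    · rw [congrArg f h]; ring
    · ring
  · -- (iii)
    intro f
    funext p
    rw [key]
    obtain ⟨⟨x, y⟩, hp⟩ := p
    set a₀ := (s x).symm ⟨y, hp⟩ with ha₀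
    have hy' : y = ((s x a₀ : {y : M // (x, y) ∈ E}) : M) := by
      rw [ha₀, (s x).apply_symm_apply]
    rw [div_mul_cancel₀ _ (hlam a₀ x)]
    simp [dE, ← hy']
  · -- (iv)
    funext p
    rw [key]
    exact inv_mul_cancel₀ (hlam _ _)
  · -- innerness
    intro f
    funext p
    simp [smulR, smulL, dE]


end GraphCalculus
end
end

section
/- Let M be a nonempty finite set, A = (M → ℂ), and E ⊆ M × M an irreflexive relation, with graph calculus (Ω¹_E, d_E). Then the connectedness condition ker d_E = ℂ·1 holds (i.e. the only functions f ∈ A with d_E f = 0 are the constants) if and only if the undirected graph on M whose edge relation is the symmetrization E ∪ Eᵀ is connected. -/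
noncomputable section

namespace GraphCalculus

variable {M : Type} [Fintype M] [Nonempty M]

/-- For the graph calculus on a finite set `M`, the
connectedness condition `ker d_E = ℂ·1` (only constants have zero differential)
holds if and only if the undirected graph whose edge relation is the
symmetrization `E ∪ Eᵀ` is connected (any two points are joined by a finite
path of edges). -/
theorem graph_calculus_connected (E : Set (M × M)) (hE : ∀ x : M, (x, x) ∉ E) :
    (∀ f : M → ℂ, dE E f = 0 → ∃ c : ℂ, f = fun _ => c) ↔
      (∀ x y : M,
        Relation.ReflTransGen (fun u v : M => (u, v) ∈ E ∨ (v, u) ∈ E) x y) := by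
  set R : M → M → Prop := fun u v => (u, v) ∈ E ∨ (v, u) ∈ E with hR
  constructor
  · intro h x y
    classical
    set f : M → ℂ := fun z => if Relation.ReflTransGen R x z then 1 else 0 with hf
    have hdf : dE E f = 0 := by
      funext e
      obtain ⟨⟨u, v⟩, he⟩ := e
      have huv : Relation.ReflTransGen R x u ↔ Relation.ReflTransGen R x v := by
        constructor
        · intro hu; exact hu.tail (Or.inl he)
        · intro hv; exact hv.tail (Or.inr he)
      simp only [dE, hf, Pi.zero_apply]
      by_cases hc : Relation.ReflTransGen R x u
      · simp [hc, huv.mp hc]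
      · simp only [hc, if_false]
        rw [if_neg (fun h' => hc (huv.mpr h'))]
        simp
    obtain ⟨c, hc⟩ := h f hdf
    have hx : f x = 1 := by simp [hf, Relation.ReflTransGen.refl]
    have hcy : f y = f x := by rw [hc]
    by_contra hy
    have : f y = 0 := by simp [hf, hy]
    rw [this, hx] at hcy
    exact one_ne_zero hcy.symm
  · intro h f hdf
    obtain ⟨x₀⟩ := ‹Nonempty M›
    refine ⟨f x₀, funext fun y => ?_⟩
    have key : ∀ u v, R u v → f u = f v := by
      intro u v huv
      have := congrFun hdf
      rcases huv with he | he
      · have h2 : f v - f u = 0 := this ⟨(u, v), he⟩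
        linear_combination -h2
      · have h2 : f u - f v = 0 := this ⟨(v, u), he⟩
        linear_combination h2
    have := h x₀ y
    induction this with
    | refl => rfl
    | tail _ hbc ih => rw [← ih]; exact (key _ _ hbc).symm
end GraphCalculus
end
end

section
/- Let G be a finite group and E ⊆ G × G an irreflexive relation. Then: (i) E is invariant under all left translations ((g,h) ↦ (kg,kh) for all k ∈ G) if and only if there exists a unique subset C ⊆ G∖{1} with E = {(g, ga) : g ∈ G, a ∈ C}; (ii) such a left-invariant E is additionally invariant under all right translations ((g,h) ↦ (gk,hk) for all k ∈ G) if and only if the corresponding subset C is stable under conjugation (Ad-stable), i.e. k⁻¹Ck = C for all k ∈ G. (This classifies the left-covariant, respectively bicovariant, differential calculi on the function algebra ℂ(G): invariant 1-forms are labelled by subsets of G∖{1}, respectively Ad-stable subsets of G∖{1}.) -/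
/-- Classification of translation-invariant differential
structures (irreflexive relations) on a finite group `G`:
(i) an irreflexive relation `E ⊆ G × G` is invariant under all left
translations iff there is a unique subset `C ⊆ G∖{1}` with
`E = {(g, ga) : g ∈ G, a ∈ C}`;
(ii) such a left-invariant `E` is additionally invariant under all right
translations iff the corresponding `C` is stable under conjugation.
(This classifies the left-covariant, resp. bicovariant, first-order
differential calculi on `ℂ(G)`.) -/
theorem left_invariant_relations_on_finite_group
    (G : Type) [Group G] [Fintype G]
    (E : Set (G × G)) (hE : ∀ g : G, (g, g) ∉ E) :
    ((∀ k g h : G, (g, h) ∈ E ↔ (k * g, k * h) ∈ E) ↔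
      (∃! C : Set G, (1 : G) ∉ C ∧ E = {p : G × G | p.1⁻¹ * p.2 ∈ C})) ∧
    (∀ C : Set G, (1 : G) ∉ C → E = {p : G × G | p.1⁻¹ * p.2 ∈ C} →
      ((∀ k g h : G, (g, h) ∈ E ↔ (g * k, h * k) ∈ E) ↔
        (∀ a ∈ C, ∀ k : G, k⁻¹ * a * k ∈ C))) := by
  constructor
  · constructor
    · intro hL
      refine ⟨{a : G | (1, a) ∈ E}, ⟨hE 1, ?_⟩, ?_⟩
      · ext ⟨g, h⟩
        simp only [Set.mem_setOf_eq]
        have := hL g⁻¹ g h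
        simpa using this
      · rintro C ⟨hC1, hCE⟩
        ext a
        have : ((1 : G), a) ∈ E ↔ a ∈ C := by
          rw [hCE]; simp
        simp [Set.mem_setOf_eq, ← this]
    · rintro ⟨C, ⟨hC1, hCE⟩, _⟩ k g h
      subst hCE
      simp only [Set.mem_setOf_eq]
      constructor <;> intro hx <;> [skip; skip] <;>
        simpa [mul_assoc] using hx
  · intro C hC1 hCE
    subst hCE
    constructor
    · intro hR a ha k
      have := (hR k 1 a).mp (by simpa using ha)
      simpa [mul_assoc] using this
    · intro hAd k g h
      simp only [Set.mem_setOf_eq]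
      constructor
      · intro hx
        have := hAd _ hx k
        simpa [mul_assoc] using this
      · intro hx
        have := hAd _ hx k⁻¹
        simpa [mul_assoc] using this
end

section
/- Let A = ℂ[b,c,d][d⁻¹], a := (1 + bc)·d⁻¹ ∈ A, and define the operators h̃ := c∂_c − b∂_b − d∂_d, x̃₊ := a∂_b + c∂_d, x̃₋ := d∂_c on A. Then the Casimir operator equals the Laplace–Beltrami operator in these coordinates: x̃₊∘x̃₋ + (1/4)·h̃∘h̃ − (1/2)·h̃ = ∂_b∘∂_c + (1/4)·E∘E + (1/2)·E as ℂ-linear endomorphisms of A, where E := c∂_c + b∂_b + d∂_d. -/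
set_option maxHeartbeats 1000000
set_option synthInstance.maxHeartbeats 1000000

noncomputable section

namespace SU2Casimir

open MvPolynomial

/-- The polynomial algebra `ℂ[b,c,d]` (variables `X 0 = b`, `X 1 = c`, `X 2 = d`). -/
abbrev Rng : Type := MvPolynomial (Fin 3) ℂ

/-- `A = ℂ[b,c,d][d⁻¹]`, the localization at the powers of `d`. -/
abbrev Alg : Type := Localization.Away (X 2 : Rng)

/-- A derivation on `Alg` vanishing on the three coordinates is zero. -/
lemma deriv_eq_zero (b c d : Alg)
    (hb : b = algebraMap Rng Alg (X 0))
    (hc : c = algebraMap Rng Alg (X 1))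
    (hd : d = algebraMap Rng Alg (X 2))
    (D : Derivation ℂ Alg Alg)
    (h1 : D b = 0) (h2 : D c = 0) (h3 : D d = 0) : D = 0 := by
  have hX : ∀ i : Fin 3, D (algebraMap Rng Alg (X i)) = 0 := by
    intro i
    fin_cases i
    · exact hb ▸ h1
    · exact hc ▸ h2
    · exact hd ▸ h3
  have hR : ∀ r : Rng, D (algebraMap Rng Alg r) = 0 := by
    intro r
    induction r using MvPolynomial.induction_on with
    | C a =>
        have : (algebraMap Rng Alg) (MvPolynomial.C a) = algebraMap ℂ Alg a := by
          rw [← MvPolynomial.algebraMap_eq, ← IsScalarTower.algebraMap_apply]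
        rw [this, Derivation.map_algebraMap]
    | add p q hp hq => rw [map_add, map_add, hp, hq, add_zero]
    | mul_X p i hp =>
        rw [map_mul, Derivation.leibniz, hp, hX i, smul_zero, smul_zero, add_zero]
  ext x
  obtain ⟨⟨r, s⟩, hx⟩ := IsLocalization.surj (Submonoid.powers (X 2 : Rng)) x
  have hDx := congrArg D hx
  rw [Derivation.leibniz, hR, hR, smul_zero] at hDx
  have hu : IsUnit (algebraMap Rng Alg (s : Rng)) :=
    IsLocalization.map_units Alg s
  rw [smul_eq_mul, zero_add] at hDx
  exact (hu.mul_right_eq_zero).mp hDx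

/-- In `A = ℂ[b,c,d][d⁻¹]`, with the partial-derivative
derivations extended to `A`, `a := (1+bc)d⁻¹`, and the operators
`h̃ = c∂_c - b∂_b - d∂_d`, `x̃₊ = a∂_b + c∂_d`, `x̃₋ = d∂_c`, the Casimir
operator equals the Laplace–Beltrami operator:
`x̃₊x̃₋ + h̃²/4 - h̃/2 = ∂_b∂_c + E²/4 + E/2`, where `E = c∂_c + b∂_b + d∂_d`. -/
theorem su2_casimir_is_laplacian
    (b c d : Alg)
    (hb : b = algebraMap Rng Alg (X 0))
    (hc : c = algebraMap Rng Alg (X 1))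
    (hd : d = algebraMap Rng Alg (X 2))
    (Db Dc Dd : Derivation ℂ Alg Alg)
    (hDb : Db b = 1 ∧ Db c = 0 ∧ Db d = 0)
    (hDc : Dc b = 0 ∧ Dc c = 1 ∧ Dc d = 0)
    (hDd : Dd b = 0 ∧ Dd c = 0 ∧ Dd d = 1)
    (dinv : Alg) (hdinv : d * dinv = 1)
    (a : Alg) (ha : a = (1 + b * c) * dinv)
    (H Xp Xm Ee : Alg →ₗ[ℂ] Alg)
    (hH : H = c • Dc.toLinearMap - b • Db.toLinearMap - d • Dd.toLinearMap)
    (hXp : Xp = a • Db.toLinearMap + c • Dd.toLinearMap)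
    (hXm : Xm = d • Dc.toLinearMap)
    (hEe : Ee = c • Dc.toLinearMap + b • Db.toLinearMap + d • Dd.toLinearMap) :
    Xp ∘ₗ Xm + ((1 : ℂ) / 4) • (H ∘ₗ H) - ((1 : ℂ) / 2) • H =
      Db.toLinearMap ∘ₗ Dc.toLinearMap + ((1 : ℂ) / 4) • (Ee ∘ₗ Ee) +
        ((1 : ℂ) / 2) • Ee := by
  obtain ⟨hbb, hbc, hbd⟩ := hDb
  obtain ⟨hcb, hcc, hcd⟩ := hDc
  obtain ⟨hdb, hdc, hdd⟩ := hDd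
  -- the partial derivatives commute
  have comm : ∀ (D1 D2 : Derivation ℂ Alg Alg),
      D1 (D2 b) = D2 (D1 b) → D1 (D2 c) = D2 (D1 c) → D1 (D2 d) = D2 (D1 d) →
      ∀ f, D1 (D2 f) = D2 (D1 f) := by
    intro D1 D2 e1 e2 e3 f
    have h := deriv_eq_zero b c d hb hc hd ⁅D1, D2⁆
      (by rw [Derivation.commutator_apply, e1, sub_self])
      (by rw [Derivation.commutator_apply, e2, sub_self])
      (by rw [Derivation.commutator_apply, e3, sub_self])
    have h2 : D1 (D2 f) - D2 (D1 f) = 0 := by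
      have := DFunLike.congr_fun h f
      rw [Derivation.commutator_apply] at this
      simpa using this
    exact sub_eq_zero.mp h2
  have ccb : ∀ f, Dc (Db f) = Db (Dc f) := comm Dc Db
    (by simp [hbb, hcb]) (by simp [hbc, hcc]) (by simp [hbd, hcd])
  have cdb : ∀ f, Dd (Db f) = Db (Dd f) := comm Dd Db
    (by simp [hbb, hdb]) (by simp [hbc, hdc]) (by simp [hbd, hdd])
  have cdc : ∀ f, Dd (Dc f) = Dc (Dd f) := comm Dd Dc
    (by simp [hcb, hdb]) (by simp [hcc, hdc]) (by simp [hcd, hdd])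
  -- reduce to the fourfold identity
  apply smul_right_injective (Alg →ₗ[ℂ] Alg) (show (4 : ℂ) ≠ 0 by norm_num)
  ext f
  simp only [LinearMap.smul_apply, LinearMap.add_apply, LinearMap.sub_apply,
    LinearMap.comp_apply, hH, hXp, hXm, hEe, Derivation.coeFn_coe,
    map_add, map_sub, Derivation.leibniz, smul_eq_mul, smul_add, smul_sub,
    smul_smul, hbb, hbc, hbd, hcb, hcc, hcd, hdb, hdc, hdd,
    mul_zero, zero_mul, mul_one, add_zero, zero_add, sub_zero]
  rw [ha]
  simp only [ccb, cdb, cdc]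
  have hsm : ∀ (r : ℂ) (x : Alg), r • x = algebraMap ℂ Alg r * x := fun r x => by
    rw [← IsScalarTower.algebraMap_smul Alg r x, smul_eq_mul]
  simp only [show ((4:ℂ) * ((1:ℂ)/4)) = 1 from by norm_num,
    show ((4:ℂ) * ((1:ℂ)/2)) = 2 from by norm_num, one_smul, hsm, map_ofNat, map_one, one_mul]
  linear_combination (4*(1+b*c)*(Db (Dc f))) * hdinv

end SU2Casimir
end
end

section
/- Let A be a commutative ℂ-algebra and Ω an A-module. Let m₁ : A × A → A, τ : A × Ω → Ω, τ' : Ω × A → Ω be ℂ-bilinear maps; on the dual-number extensions A[ε] = A ⊕ εA and Ω[ε] = Ω ⊕ εΩ (ε² = 0) define f•g := fg + ε·m₁(f,g), f•ω := fω + ε·τ(f,ω), ω•f := fω + ε·τ'(ω,f), extended ℂ[ε]-bilinearly. Assume • is associative on A[ε] and Ω[ε] is an A[ε]-bimodule: (f•g)•ω = f•(g•ω), (f•ω)•g = f•(ω•g), and (ω•f)•g = ω•(f•g) for all f,g ∈ A[ε], ω ∈ Ω[ε]. Define {f,g} := m₁(f,g) − m₁(g,f) and the preconnection ∇̂_f ω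 := τ(f,ω) − τ'(ω,f) (so f•ω − ω•f = ε·∇̂_f ω for f ∈ A, ω ∈ Ω). Then the preconnection satisfies the covariant-derivative Leibniz rule: ∇̂_f(g·ω) = {f,g}·ω + g·∇̂_f ω for all f,g ∈ A and ω ∈ Ω. -/
noncomputable section

namespace Semiclassical

variable {A : Type} [CommRing A] [Algebra ℂ A]
variable {Ω : Type} [AddCommGroup Ω] [Module A Ω] [Module ℂ Ω] [IsScalarTower ℂ A Ω]

/-- The deformed product on the dual-number extension `A[ε] = A ⊕ εA`
(`ε² = 0`), encoded on pairs: ℂ[ε]-bilinear extension of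
`f • g = fg + ε·m₁(f,g)`. -/
def bullet (m₁ : A →ₗ[ℂ] A →ₗ[ℂ] A) (x y : A × A) : A × A :=
  (x.1 * y.1, x.1 * y.2 + x.2 * y.1 + m₁ x.1 y.1)

/-- The deformed left action of `A[ε]` on `Ω[ε] = Ω ⊕ εΩ`: ℂ[ε]-bilinear
extension of `f • ω = fω + ε·τ(f,ω)`. -/
def lact (τ : A →ₗ[ℂ] Ω →ₗ[ℂ] Ω) (F : A × A) (W : Ω × Ω) : Ω × Ω :=
  (F.1 • W.1, F.1 • W.2 + F.2 • W.1 + τ F.1 W.1)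

/-- The deformed right action of `A[ε]` on `Ω[ε] = Ω ⊕ εΩ`: ℂ[ε]-bilinear
extension of `ω • f = fω + ε·τ'(ω,f)`. -/
def ract (τ' : Ω →ₗ[ℂ] A →ₗ[ℂ] Ω) (W : Ω × Ω) (F : A × A) : Ω × Ω :=
  (F.1 • W.1, F.1 • W.2 + F.2 • W.1 + τ' W.1 F.1)

/-- Given first-order deformation data `(m₁, τ, τ')` making
`A[ε]` associative and `Ω[ε]` an `A[ε]`-bimodule, the preconnection
`∇̂_f ω := τ(f,ω) - τ'(ω,f)` satisfies the covariant-derivative Leibniz rule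
`∇̂_f(g·ω) = {f,g}·ω + g·∇̂_f ω`, where `{f,g} = m₁(f,g) - m₁(g,f)`. -/
theorem preconnection_leibniz
    (m₁ : A →ₗ[ℂ] A →ₗ[ℂ] A) (τ : A →ₗ[ℂ] Ω →ₗ[ℂ] Ω) (τ' : Ω →ₗ[ℂ] A →ₗ[ℂ] Ω)
    (hassoc : ∀ x y z : A × A,
      bullet m₁ (bullet m₁ x y) z = bullet m₁ x (bullet m₁ y z))
    (hleft : ∀ (F G : A × A) (W : Ω × Ω),
      lact τ (bullet m₁ F G) W = lact τ F (lact τ G W))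
    (hmid : ∀ (F : A × A) (W : Ω × Ω) (G : A × A),
      ract τ' (lact τ F W) G = lact τ F (ract τ' W G))
    (hright : ∀ (W : Ω × Ω) (F G : A × A),
      ract τ' (ract τ' W F) G = ract τ' W (bullet m₁ F G)) :
    ∀ (f g : A) (ω : Ω),
      τ f (g • ω) - τ' (g • ω) f =
        (m₁ f g - m₁ g f) • ω + g • (τ f ω - τ' ω f) := by
  intro f g ω
  have hM := congrArg Prod.snd (hmid (f, 0) (ω, 0) (g, 0))
  have hR := congrArg Prod.snd (hright (ω, 0) (g, 0) (f, 0))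
  have hR' := congrArg Prod.snd (hright (ω, 0) (f, 0) (g, 0))
  simp only [lact, ract, bullet, map_zero, LinearMap.zero_apply, zero_smul,
    smul_zero, add_zero, zero_add, mul_zero, zero_mul] at hM hR hR'
  have e1 : (τ f) (g • ω) = g • (τ f) ω + (τ' (f • ω)) g - f • (τ' ω) g := by
    rw [eq_sub_iff_add_eq, add_comm]; exact hM.symm
  have e2 : (τ' (g • ω)) f = (m₁ g) f • ω + (τ' ω) (g * f) - f • (τ' ω) g := by
    rw [eq_sub_iff_add_eq, add_comm]; exact hR
  have e3 : (τ' (f • ω)) g = (m₁ f) g • ω + (τ' ω) (f * g) - g • (τ' ω) f := by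
    rw [eq_sub_iff_add_eq, add_comm]; exact hR'
  rw [e1, e3, e2, mul_comm g f, sub_smul, smul_sub]
  abel

end Semiclassical
end
end

section
/- Let A be a commutative ℂ-algebra, Ω an A-module, and let (m₁, τ, τ') be first-order deformation data making A[ε] an associative algebra under • and Ω[ε] an A[ε]-bimodule (ε² = 0), with bracket {f,g} := m₁(f,g) − m₁(g,f) and preconnection ∇̂_f ω := τ(f,ω) − τ'(ω,f). Suppose further d : A → Ω and d₁ : A → Ω are ℂ-linear maps such that D : A[ε] → Ω[ε], D(f + εg) := df + ε(d₁f + dg), satisfies the Leibniz rule D(F•G) = (DF)•G + F•(DG) for all F,G ∈ A[ε]. Then d is a derivation for the undeformed structure, and the Poisson-compatibility condition holds: ∇̂_f(dg) − ∇̂_g(df) = d{f,g} for all f,g ∈ A. -/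
noncomputable section

namespace Semiclassical

variable {A : Type} [CommRing A] [Algebra ℂ A]
variable {Ω : Type} [AddCommGroup Ω] [Module A Ω] [Module ℂ Ω] [IsScalarTower ℂ A Ω]

/-- The deformed differential `D(f + εg) := df + ε(d₁f + dg)` on `A[ε]`. -/
def Dmap (d d₁ : A →ₗ[ℂ] Ω) (F : A × A) : Ω × Ω :=
  (d F.1, d₁ F.1 + d F.2)

/-- Given first-order deformation data `(m₁, τ, τ')` making
`A[ε]` associative and `Ω[ε]` an `A[ε]`-bimodule, if ℂ-linear maps
`d, d₁ : A → Ω` are such that `D(f + εg) := df + ε(d₁f + dg)` satisfies the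
Leibniz rule `D(F•G) = (DF)•G + F•(DG)` on `A[ε]`, then `d` is a derivation
for the undeformed structure and the Poisson-compatibility condition
`∇̂_f(dg) - ∇̂_g(df) = d{f,g}` holds, where `{f,g} = m₁(f,g) - m₁(g,f)` and
`∇̂_f ω = τ(f,ω) - τ'(ω,f)`. -/
theorem preconnection_poisson_compatible
    (m₁ : A →ₗ[ℂ] A →ₗ[ℂ] A) (τ : A →ₗ[ℂ] Ω →ₗ[ℂ] Ω) (τ' : Ω →ₗ[ℂ] A →ₗ[ℂ] Ω)
    (hassoc : ∀ x y z : A × A,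
      bullet m₁ (bullet m₁ x y) z = bullet m₁ x (bullet m₁ y z))
    (hleft : ∀ (F G : A × A) (W : Ω × Ω),
      lact τ (bullet m₁ F G) W = lact τ F (lact τ G W))
    (hmid : ∀ (F : A × A) (W : Ω × Ω) (G : A × A),
      ract τ' (lact τ F W) G = lact τ F (ract τ' W G))
    (hright : ∀ (W : Ω × Ω) (F G : A × A),
      ract τ' (ract τ' W F) G = ract τ' W (bullet m₁ F G))
    (d d₁ : A →ₗ[ℂ] Ω)
    (hD : ∀ F G : A × A,
      Dmap d d₁ (bullet m₁ F G) =
        ract τ' (Dmap d d₁ F) G + lact τ F (Dmap d d₁ G)) :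
    (∀ f g : A, d (f * g) = f • d g + g • d f) ∧
    (∀ f g : A,
      (τ f (d g) - τ' (d g) f) - (τ g (d f) - τ' (d f) g) =
        d (m₁ f g - m₁ g f)) := by
  have key : ∀ f g : A,
      d (f * g) = g • d f + f • d g ∧
      d₁ (f * g) + d (m₁ f g) = g • d₁ f + τ' (d f) g + (f • d₁ g + τ f (d g)) := by
    intro f g
    have h := hD (f, 0) (g, 0)
    simp only [bullet, Dmap, lact, ract, Prod.mk.injEq, Prod.ext_iff, Prod.fst_add,
      Prod.snd_add, map_zero, mul_zero, zero_mul, add_zero, zero_add, zero_smul,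
      map_mul] at h
    exact h
  constructor
  · intro f g
    rw [(key f g).1]; abel
  · intro f g
    have h1 := (key f g).2
    have h2 := (key g f).2
    rw [mul_comm g f] at h2
    rw [map_sub]
    have e : d (m₁ f g) - d (m₁ g f) =
        (g • d₁ f + τ' (d f) g + (f • d₁ g + τ f (d g))) -
          (f • d₁ g + τ' (d g) f + (g • d₁ f + τ g (d f))) := by
      rw [← h1, ← h2]; abel
    rw [e]; abel

end Semiclassical
end
end
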